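/- Let K and H be Hopf algebras with bijective antipodes over k, τ : K ⊗ H → k a linear form satisfying (A.1)–(A.4), W a Yetter–Drinfel'd module over K, V a Yetter–Drinfel'd module over H, and β : W ⊗ V → k a linear form. Then the following are equivalent: (a) β(k·w, v) = β(w, v↼τ_ℓ(k)) for all k ∈ K, w ∈ W, v ∈ V, and β(w↼τ_r(h), v) = β(w, S⁻¹(h)·v) for all w ∈ W, h ∈ H, v ∈ V; (b) β_ℓ(W) ⊆ (V^op̲)^r and β_ℓ : W → (V^op̲)^r is τ_ℓ-linear and τ_ℓ-colinear. -/

import Mathlib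

open TensorProduct Coalgebra

universe u

variable {k H M : Type u} [Field k] [Ring H] [HopfAlgebra k H]
  [AddCommGroup M] [Module k M]

/-- The left hand side `h ⊗ m ↦ h₁ m₍₋₁₎ ⊗ h₂ · m₍₀₎` of the Yetter–Drinfel'd
compatibility condition, as a linear map `H ⊗ M → H ⊗ M`. -/
noncomputable def ydLHS (act : H ⊗[k] M →ₗ[k] M) (coact : M →ₗ[k] H ⊗[k] M) :
    H ⊗[k] M →ₗ[k] H ⊗[k] M :=
  TensorProduct.map (LinearMap.mul' k H) act
    ∘ₗ (TensorProduct.tensorTensorTensorComm k H H H M).toLinearMap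
    ∘ₗ TensorProduct.map (Coalgebra.comul : H →ₗ[k] H ⊗[k] H) coact

/-- The right hand side `h ⊗ m ↦ (h₁ · m)₍₋₁₎ h₂ ⊗ (h₁ · m)₍₀₎` of the Yetter–Drinfel'd
compatibility condition, as a linear map `H ⊗ M → H ⊗ M`. -/
noncomputable def ydRHS (act : H ⊗[k] M →ₗ[k] M) (coact : M →ₗ[k] H ⊗[k] M) :
    H ⊗[k] M →ₗ[k] H ⊗[k] M :=
  TensorProduct.map (LinearMap.mul' k H ∘ₗ (TensorProduct.comm k H H).toLinearMap) LinearMap.id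
    ∘ₗ (TensorProduct.assoc k H H M).symm.toLinearMap
    ∘ₗ TensorProduct.map LinearMap.id (coact ∘ₗ act)
    ∘ₗ (TensorProduct.assoc k H H M).toLinearMap
    ∘ₗ TensorProduct.map (TensorProduct.comm k H H).toLinearMap LinearMap.id
    ∘ₗ TensorProduct.map (Coalgebra.comul : H →ₗ[k] H ⊗[k] H) LinearMap.id

/-- `v ↼ p = p(v₍₋₁₎) v₍₀₎`, the right action of a functional `p ∈ H*` induced by a left
`H`-comodule structure. -/
noncomputable def rAct {k H V : Type u} [Field k] [Ring H] [HopfAlgebra k H]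
    [AddCommGroup V] [Module k V] (coact : V →ₗ[k] H ⊗[k] V) (p : H →ₗ[k] k) :
    V →ₗ[k] V :=
  (TensorProduct.lid k V).toLinearMap ∘ₗ TensorProduct.map p LinearMap.id ∘ₗ coact

/- STATEMENT 18: Let `K`, `H` be Hopf algebras with bijective antipodes, `τ : K ⊗ H → k`
satisfying (A.1)–(A.4), `W ∈ ᴷᴷYD`, `V ∈ ᴴᴴYD`, `β : W ⊗ V → k`.  TFAE:
(a) (C.1) `β(x·w, v) = β(w, v↼τ_ℓ(x))` and (C.2) `β(w↼τ_r(h), v) = β(w, S⁻¹(h)·v)`;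
(b) each `β_ℓ(w)` lies in `(V^op̲)^r` (it kills `I ·op V` for some cofinite ideal `I` of `H`),
and `β_ℓ : W → (V^op̲)^r` is `τ_ℓ`-linear and `τ_ℓ`-colinear.  The `H°`-module and comodule
structure of `(V^op̲)^r` are used through their defining evaluation formulas:
`τ_ℓ`-linearity reads `β(x·w, v) = τ(x, v₍₋₁₎) β(w, v₍₀₎) = β(w, v↼τ_ℓ(x))`, and
`τ_ℓ`-colinearity reads `β_ℓ(w)(h ·op v) = τ(w₍₋₁₎, h) β_ℓ(w₍₀₎)(v)`, i.e.
`β(w, S⁻¹(h)·v) = τ(w₍₋₁₎, h) β(w₍₀₎, v)`. -/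
universe v

/-- Relabel a coalgebra `Repr` so that its index type lives in an arbitrary universe. -/
noncomputable def myRelabel.{uu, vv} {R : Type uu} {A : Type uu} [CommSemiring R] [AddCommMonoid A]
    [Module R A] [CoalgebraStruct R A] {a : A} {ι : Type uu} (r : Coalgebra.Repr R a ι) :
    Coalgebra.Repr R a (ULift.{vv} (Fin r.index.card)) where
  index := Finset.univ
  left u := r.left (r.index.equivFin.symm u.down : r.index)
  right u := r.right (r.index.equivFin.symm u.down : r.index)
  eq := by
    rw [← r.eq, ← Finset.sum_coe_sort r.index (fun i => r.left i ⊗ₜ[R] r.right i)]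
    exact Fintype.sum_equiv (Equiv.ulift.trans r.index.equivFin.symm) _ _ (fun u => rfl)

theorem aux_ideal {k K H : Type u} [Field k] [Ring K] [Ring H]
    [HopfAlgebra k K] [HopfAlgebra k H]
    (τ : K ⊗[k] H →ₗ[k] k)
    (hA1 : ∀ (x : K) (a a' : H) {ι : Type v} (r : Coalgebra.Repr k x ι),
      τ (x ⊗ₜ (a * a')) = ∑ i ∈ r.index, τ (r.right i ⊗ₜ a) * τ (r.left i ⊗ₜ a'))
    (X : Finset K) :
    ∃ I : Submodule k H,
      (∀ a ∈ I, ∀ h : H, h * a ∈ I ∧ a * h ∈ I) ∧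
      FiniteDimensional k (H ⧸ I) ∧
      (∀ a ∈ I, ∀ x ∈ X, τ (x ⊗ₜ a) = 0) := by
  classical
  set I : Submodule k H :=
    { carrier := {a | ∀ x ∈ X, ∀ b c : H, τ (x ⊗ₜ (b * a * c)) = 0}
      add_mem' := by
        intro a a' ha ha' x hx b c
        rw [mul_add, add_mul, TensorProduct.tmul_add, map_add, ha x hx b c, ha' x hx b c,
          add_zero]
      zero_mem' := by
        intro x hx b c
        rw [mul_zero, zero_mul, TensorProduct.tmul_zero, map_zero]
      smul_mem' := by
        intro t a ha x hx b c
        rw [mul_smul_comm, smul_mul_assoc, TensorProduct.tmul_smul, map_smul, ha x hx b c,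
          smul_zero] } with hIdef
  have hImem : ∀ a : H, a ∈ I ↔ ∀ x ∈ X, ∀ b c : H, τ (x ⊗ₜ (b * a * c)) = 0 := by
    intro a; rfl
  refine ⟨I, ?_, ?_, ?_⟩
  · intro a ha h
    rw [hImem] at ha
    constructor
    · rw [hImem]; intro x hx b c
      have := ha x hx (b * h) c
      rwa [mul_assoc b h a] at this
    · rw [hImem]; intro x hx b c
      have := ha x hx b (h * c)
      rw [← mul_assoc b a h, mul_assoc (b*a) h c]; exact this
  · -- cofiniteness
    set M : Finset K := X.biUnion (fun x =>
      (myRelabel.{u, v} (ℛ k x)).index.biUnion (fun i =>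
        ((myRelabel.{u, v} (ℛ k ((myRelabel.{u, v} (ℛ k x)).right i))).index).image
          (myRelabel.{u, v} (ℛ k ((myRelabel.{u, v} (ℛ k x)).right i))).left)) with hM
    set Φ : H →ₗ[k] (↥M → k) :=
      LinearMap.pi (fun m => τ ∘ₗ TensorProduct.mk k K H (m : K)) with hΦ
    have hJI : LinearMap.ker Φ ≤ I := by
      intro a ha
      have hkey : ∀ m ∈ M, τ (m ⊗ₜ a) = 0 := by
        intro m hm
        have h0 : Φ a = 0 := ha
        have := congrFun h0 ⟨m, hm⟩
        simpa [hΦ] using this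
      rw [hImem]
      intro x hx b c
      rw [hA1 x (b * a) c (myRelabel.{u, v} (ℛ k x))]
      apply Finset.sum_eq_zero
      intro i hi
      rw [hA1 _ b a (myRelabel.{u, v} (ℛ k ((myRelabel.{u, v} (ℛ k x)).right i))),
        Finset.sum_eq_zero, zero_mul]
      intro j hj
      rw [hkey _ ?_, mul_zero]
      rw [hM]
      exact Finset.mem_biUnion.2 ⟨x, hx, Finset.mem_biUnion.2 ⟨i, hi,
        Finset.mem_image_of_mem _ hj⟩⟩
    have hfin : FiniteDimensional k (H ⧸ LinearMap.ker Φ) :=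
      Module.Finite.equiv Φ.quotKerEquivRange.symm
    exact Module.Finite.of_surjective
      (Submodule.mapQ (LinearMap.ker Φ) I LinearMap.id (by simpa using hJI))
      (by
        intro y
        obtain ⟨a, rfl⟩ := Submodule.Quotient.mk_surjective I y
        exact ⟨Submodule.Quotient.mk a, by rw [Submodule.mapQ_apply]; rfl⟩)
  · intro a ha x hx
    rw [hImem] at ha
    have := ha x hx 1 1
    rwa [one_mul, mul_one] at this

theorem stmt_18 {k K H W V : Type u} [Field k] [Ring K] [Ring H]
    [HopfAlgebra k K] [HopfAlgebra k H]
    [AddCommGroup W] [Module k W] [AddCommGroup V] [Module k V]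
    (SinvK : K →ₗ[k] K)
    (hSK₁ : HopfAlgebra.antipode (R := k) ∘ₗ SinvK = LinearMap.id)
    (hSK₂ : SinvK ∘ₗ HopfAlgebra.antipode (R := k) = LinearMap.id)
    (SinvH : H →ₗ[k] H)
    (hSH₁ : HopfAlgebra.antipode (R := k) ∘ₗ SinvH = LinearMap.id)
    (hSH₂ : SinvH ∘ₗ HopfAlgebra.antipode (R := k) = LinearMap.id)
    (τ : K ⊗[k] H →ₗ[k] k)
    -- (A.1)–(A.4) for `τ`:
    (hA1 : ∀ (x : K) (a a' : H) {ι : Type*} (r : Coalgebra.Repr k x ι),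
      τ (x ⊗ₜ (a * a')) = ∑ i ∈ r.index, τ (r.right i ⊗ₜ a) * τ (r.left i ⊗ₜ a'))
    (hA2 : ∀ a : H, τ ((1 : K) ⊗ₜ a) = Coalgebra.counit a)
    (hA3 : ∀ (x x' : K) (a : H) {ι : Type*} (r : Coalgebra.Repr k a ι),
      τ ((x * x') ⊗ₜ a) = ∑ i ∈ r.index, τ (x ⊗ₜ r.left i) * τ (x' ⊗ₜ r.right i))
    (hA4 : ∀ x : K, τ (x ⊗ₜ (1 : H)) = Coalgebra.counit x)
    -- `W` is a Yetter–Drinfel'd module over `K`: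
    (actW : K ⊗[k] W →ₗ[k] W) (coactW : W →ₗ[k] K ⊗[k] W)
    (hactW1 : ∀ w : W, actW ((1 : K) ⊗ₜ w) = w)
    (hactW2 : ∀ (x y : K) (w : W), actW ((x * y) ⊗ₜ w) = actW (x ⊗ₜ actW (y ⊗ₜ w)))
    (hcoW1 : TensorProduct.map (Coalgebra.comul : K →ₗ[k] K ⊗[k] K) LinearMap.id ∘ₗ coactW
      = (TensorProduct.assoc k K K W).symm.toLinearMap
          ∘ₗ TensorProduct.map LinearMap.id coactW ∘ₗ coactW)
    (hcoW2 : (TensorProduct.lid k W).toLinearMap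
        ∘ₗ TensorProduct.map (Coalgebra.counit : K →ₗ[k] k) LinearMap.id ∘ₗ coactW
      = LinearMap.id)
    (hydW : ydLHS actW coactW = ydRHS actW coactW)
    -- `V` is a Yetter–Drinfel'd module over `H`:
    (actV : H ⊗[k] V →ₗ[k] V) (coactV : V →ₗ[k] H ⊗[k] V)
    (hactV1 : ∀ v : V, actV ((1 : H) ⊗ₜ v) = v)
    (hactV2 : ∀ (g h : H) (v : V), actV ((g * h) ⊗ₜ v) = actV (g ⊗ₜ actV (h ⊗ₜ v)))
    (hcoV1 : TensorProduct.map (Coalgebra.comul : H →ₗ[k] H ⊗[k] H) LinearMap.id ∘ₗ coactV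
      = (TensorProduct.assoc k H H V).symm.toLinearMap
          ∘ₗ TensorProduct.map LinearMap.id coactV ∘ₗ coactV)
    (hcoV2 : (TensorProduct.lid k V).toLinearMap
        ∘ₗ TensorProduct.map (Coalgebra.counit : H →ₗ[k] k) LinearMap.id ∘ₗ coactV
      = LinearMap.id)
    (hydV : ydLHS actV coactV = ydRHS actV coactV)
    (β : W ⊗[k] V →ₗ[k] k) :
    -- (a) ⟺ (b):
    (((∀ (x : K) (w : W) (v : V),
        β (actW (x ⊗ₜ w) ⊗ₜ v) = β (w ⊗ₜ rAct coactV (τ ∘ₗ TensorProduct.mk k K H x) v)) ∧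
      (∀ (h : H) (w : W) (v : V),
        β (rAct coactW (τ ∘ₗ (TensorProduct.mk k K H).flip h) w ⊗ₜ v)
          = β (w ⊗ₜ actV (SinvH h ⊗ₜ v))))
    ↔
    -- (b): `β_ℓ(W) ⊆ (V^op̲)^r` …
    ((∀ w : W, ∃ I : Submodule k H,
        (∀ x ∈ I, ∀ h : H, h * x ∈ I ∧ x * h ∈ I) ∧
        FiniteDimensional k (H ⧸ I) ∧
        (∀ x ∈ I, ∀ v : V, β (w ⊗ₜ actV (SinvH x ⊗ₜ v)) = 0)) ∧
    -- … `β_ℓ` is `τ_ℓ`-linear …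
     (∀ (x : K) (w : W) (v : V),
        β (actW (x ⊗ₜ w) ⊗ₜ v) = β (w ⊗ₜ rAct coactV (τ ∘ₗ TensorProduct.mk k K H x) v)) ∧
    -- … and `τ_ℓ`-colinear:
     (∀ (w : W) (h : H) (v : V),
        β (w ⊗ₜ actV (SinvH h ⊗ₜ v))
          = (LinearMap.mul' k k ∘ₗ TensorProduct.map τ β
              ∘ₗ (TensorProduct.tensorTensorTensorComm k K W H V).toLinearMap
              ∘ₗ TensorProduct.map coactW LinearMap.id) (w ⊗ₜ (h ⊗ₜ v))))) := by
  
  classical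
  -- The colinearity composite evaluated pointwise.
  have key : ∀ (t : K ⊗[k] W) (h : H) (v : V),
      LinearMap.mul' k k (TensorProduct.map τ β
        ((TensorProduct.tensorTensorTensorComm k K W H V) (t ⊗ₜ (h ⊗ₜ v))))
      = β ((TensorProduct.lid k W)
          (TensorProduct.map (τ ∘ₗ (TensorProduct.mk k K H).flip h) LinearMap.id t) ⊗ₜ v) := by
    intro t h v
    induction t using TensorProduct.induction_on with
    | zero => simp
    | tmul x w' =>
        simp only [TensorProduct.tensorTensorTensorComm_tmul, TensorProduct.map_tmul,
          LinearMap.mul'_apply, TensorProduct.lid_tmul, LinearMap.id_coe, id_eq,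
          LinearMap.coe_comp, Function.comp_apply, LinearMap.flip_apply, TensorProduct.mk_apply]
        rw [← TensorProduct.smul_tmul', map_smul, smul_eq_mul]
    | add t₁ t₂ ih₁ ih₂ =>
        simp only [TensorProduct.add_tmul, map_add, ih₁, ih₂]
  have hcomp : ∀ (w : W) (h : H) (v : V),
      (LinearMap.mul' k k ∘ₗ TensorProduct.map τ β
        ∘ₗ (TensorProduct.tensorTensorTensorComm k K W H V).toLinearMap
        ∘ₗ TensorProduct.map coactW LinearMap.id) (w ⊗ₜ (h ⊗ₜ v))
      = β (rAct coactW (τ ∘ₗ (TensorProduct.mk k K H).flip h) w ⊗ₜ v) := by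
    intro w h v
    have := key (coactW w) h v
    simpa [rAct] using this
  have hexp : ∀ (w : W) (h : H) (v : V) (S : Finset (K × W)),
      coactW w = ∑ p ∈ S, p.1 ⊗ₜ p.2 →
      β (rAct coactW (τ ∘ₗ (TensorProduct.mk k K H).flip h) w ⊗ₜ v)
        = ∑ p ∈ S, τ (p.1 ⊗ₜ h) * β (p.2 ⊗ₜ v) := by
    intro w h v S hS
    simp only [rAct, LinearMap.coe_comp, LinearEquiv.coe_coe, Function.comp_apply, hS,
      map_sum, TensorProduct.map_tmul, LinearMap.id_coe, id_eq, TensorProduct.lid_tmul,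
      TensorProduct.sum_tmul]
    refine Finset.sum_congr rfl fun p _ => ?_
    rw [← TensorProduct.smul_tmul', map_smul, smul_eq_mul, LinearMap.flip_apply,
      TensorProduct.mk_apply]
  constructor
  · rintro ⟨hC1, hC2⟩
    have hcolin : ∀ (w : W) (h : H) (v : V),
        β (w ⊗ₜ actV (SinvH h ⊗ₜ v))
          = (LinearMap.mul' k k ∘ₗ TensorProduct.map τ β
              ∘ₗ (TensorProduct.tensorTensorTensorComm k K W H V).toLinearMap
              ∘ₗ TensorProduct.map coactW LinearMap.id) (w ⊗ₜ (h ⊗ₜ v)) := by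
      intro w h v
      rw [← hC2 h w v, hcomp w h v]
    refine ⟨?_, hC1, hcolin⟩
    intro w
    obtain ⟨S, hS⟩ := TensorProduct.exists_finset (coactW w)
    obtain ⟨I, hI1, hI2, hI3⟩ := aux_ideal τ hA1 (S.image Prod.fst)
    refine ⟨I, hI1, hI2, ?_⟩
    intro a ha v
    rw [hcolin w a v, hcomp w a v, hexp w a v S hS]
    apply Finset.sum_eq_zero
    intro p hp
    rw [hI3 a ha p.1 (Finset.mem_image_of_mem _ hp), zero_mul]
  · rintro ⟨_, hC1, hcolin⟩
    refine ⟨hC1, ?_⟩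
    intro h w v
    rw [hcolin w h v]
    exact (hcomp w h v).symm
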